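/- arXiv:1611.05430 — 2 statements merged into one kernel-verified Lean document; each statement's English description precedes it below -/
import Mathlib

section
/- If r₁, r₂ ∈ ℝ³ are linearly independent unit vectors and k₁, k₂ > 0, then the matrix M = -k₁ (r₁ₓ)² - k₂ (r₂ₓ)² is symmetric and positive definite, where vₓ denotes the skew-symmetric matrix such that vₓ x = v × x for all x. -/
open Matrix

noncomputable def enorm3 (v : Fin 3 → ℝ) : ℝ := Real.sqrt (v ⬝ᵥ v)

def skew (v : Fin 3 → ℝ) : Matrix (Fin 3) (Fin 3) ℝ :=
  !![0, -v 2, v 1; v 2, 0, -v 0; -v 1, v 0, 0]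

lemma quad_skew (v x : Fin 3 → ℝ) :
    x ⬝ᵥ ((skew v ^ 2) *ᵥ x) =
      -((v 1 * x 2 - v 2 * x 1)^2 + (v 2 * x 0 - v 0 * x 2)^2 +
        (v 0 * x 1 - v 1 * x 0)^2) := by
  simp [skew, pow_two, dotProduct, mulVec, Matrix.mul_apply, Fin.sum_univ_three,
    Matrix.cons_val_zero, Matrix.cons_val_one]
  ring

lemma parallel_of_cross_zero (v x : Fin 3 → ℝ) (hx : x ≠ 0)
    (h0 : v 1 * x 2 - v 2 * x 1 = 0) (h1 : v 2 * x 0 - v 0 * x 2 = 0)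
    (h2 : v 0 * x 1 - v 1 * x 0 = 0) : ∃ a : ℝ, v = a • x := by
  have hx' : x 0 ≠ 0 ∨ x 1 ≠ 0 ∨ x 2 ≠ 0 := by
    by_contra h
    push_neg at h
    apply hx
    funext i
    fin_cases i <;> simp [h.1, h.2.1, h.2.2]
  rcases hx' with h | h | h
  · refine ⟨v 0 / x 0, ?_⟩
    funext i
    fin_cases i <;> simp [Pi.smul_apply, div_mul_eq_mul_div, eq_div_iff h] <;> nlinarith
  · refine ⟨v 1 / x 1, ?_⟩
    funext i
    fin_cases i <;> simp [Pi.smul_apply, div_mul_eq_mul_div, eq_div_iff h] <;> nlinarith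
  · refine ⟨v 2 / x 2, ?_⟩
    funext i
    fin_cases i <;> simp [Pi.smul_apply, div_mul_eq_mul_div, eq_div_iff h] <;> nlinarith

theorem stmt0 (r₁ r₂ : Fin 3 → ℝ) (k₁ k₂ : ℝ)
    (h₁ : enorm3 r₁ = 1) (h₂ : enorm3 r₂ = 1)
    (hli : LinearIndependent ℝ ![r₁, r₂]) (hk₁ : 0 < k₁) (hk₂ : 0 < k₂) :
    (-(k₁ • (skew r₁ ^ 2)) - k₂ • (skew r₂ ^ 2)).IsSymm ∧
    (-(k₁ • (skew r₁ ^ 2)) - k₂ • (skew r₂ ^ 2)).PosDef := by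
  have hsymm : (-(k₁ • (skew r₁ ^ 2)) - k₂ • (skew r₂ ^ 2)).IsSymm := by
    rw [Matrix.IsSymm]
    ext i j
    fin_cases i <;> fin_cases j <;>
      simp [skew, pow_two, Matrix.mul_apply, Fin.sum_univ_three, Matrix.transpose_apply] <;> ring
  refine ⟨hsymm, Matrix.posDef_iff_dotProduct_mulVec.mpr ⟨?_, ?_⟩⟩
  · rw [Matrix.IsHermitian, conjTranspose_eq_transpose_of_trivial]
    exact hsymm
  · intro x hx
    have key : ∀ v : Fin 3 → ℝ,
        x ⬝ᵥ ((skew v ^ 2) *ᵥ x) =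
        -((v 1 * x 2 - v 2 * x 1)^2 + (v 2 * x 0 - v 0 * x 2)^2 +
          (v 0 * x 1 - v 1 * x 0)^2) := fun v => quad_skew v x
    have hexp : star x ⬝ᵥ ((-(k₁ • (skew r₁ ^ 2)) - k₂ • (skew r₂ ^ 2)) *ᵥ x) =
        k₁ * ((r₁ 1 * x 2 - r₁ 2 * x 1)^2 + (r₁ 2 * x 0 - r₁ 0 * x 2)^2 +
          (r₁ 0 * x 1 - r₁ 1 * x 0)^2) +
        k₂ * ((r₂ 1 * x 2 - r₂ 2 * x 1)^2 + (r₂ 2 * x 0 - r₂ 0 * x 2)^2 +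
          (r₂ 0 * x 1 - r₂ 1 * x 0)^2) := by
      have : star x = x := by simp
      rw [this, Matrix.sub_mulVec, Matrix.neg_mulVec, Matrix.smul_mulVec,
        Matrix.smul_mulVec, dotProduct_sub, dotProduct_neg, dotProduct_smul,
        dotProduct_smul, key r₁, key r₂, smul_eq_mul, smul_eq_mul]
      ring
    rw [hexp]
    set A := (r₁ 1 * x 2 - r₁ 2 * x 1)^2 + (r₁ 2 * x 0 - r₁ 0 * x 2)^2 +
        (r₁ 0 * x 1 - r₁ 1 * x 0)^2 with hA
    set B := (r₂ 1 * x 2 - r₂ 2 * x 1)^2 + (r₂ 2 * x 0 - r₂ 0 * x 2)^2 +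
        (r₂ 0 * x 1 - r₂ 1 * x 0)^2 with hB
    have hA0 : 0 ≤ A := by positivity
    have hB0 : 0 ≤ B := by positivity
    rcases lt_or_eq_of_le hA0 with hA' | hA'
    · nlinarith
    rcases lt_or_eq_of_le hB0 with hB' | hB'
    · nlinarith
    -- both A = 0 and B = 0: contradiction with linear independence
    exfalso
    have eA := hA'.symm
    have eB := hB'.symm
    rw [hA] at eA
    rw [hB] at eB
    have n1 := sq_nonneg (r₁ 1 * x 2 - r₁ 2 * x 1)
    have n2 := sq_nonneg (r₁ 2 * x 0 - r₁ 0 * x 2)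
    have n3 := sq_nonneg (r₁ 0 * x 1 - r₁ 1 * x 0)
    have m1 := sq_nonneg (r₂ 1 * x 2 - r₂ 2 * x 1)
    have m2 := sq_nonneg (r₂ 2 * x 0 - r₂ 0 * x 2)
    have m3 := sq_nonneg (r₂ 0 * x 1 - r₂ 1 * x 0)
    have two0 : (2:ℕ) ≠ 0 := two_ne_zero
    have c₁0 : r₁ 1 * x 2 - r₁ 2 * x 1 = 0 := by
      have : (r₁ 1 * x 2 - r₁ 2 * x 1)^2 = 0 := by linarith
      exact pow_eq_zero_iff two0 |>.mp this
    have c₁1 : r₁ 2 * x 0 - r₁ 0 * x 2 = 0 := by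
      have : (r₁ 2 * x 0 - r₁ 0 * x 2)^2 = 0 := by linarith
      exact pow_eq_zero_iff two0 |>.mp this
    have c₁2 : r₁ 0 * x 1 - r₁ 1 * x 0 = 0 := by
      have : (r₁ 0 * x 1 - r₁ 1 * x 0)^2 = 0 := by linarith
      exact pow_eq_zero_iff two0 |>.mp this
    have c₂0 : r₂ 1 * x 2 - r₂ 2 * x 1 = 0 := by
      have : (r₂ 1 * x 2 - r₂ 2 * x 1)^2 = 0 := by linarith
      exact pow_eq_zero_iff two0 |>.mp this
    have c₂1 : r₂ 2 * x 0 - r₂ 0 * x 2 = 0 := by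
      have : (r₂ 2 * x 0 - r₂ 0 * x 2)^2 = 0 := by linarith
      exact pow_eq_zero_iff two0 |>.mp this
    have c₂2 : r₂ 0 * x 1 - r₂ 1 * x 0 = 0 := by
      have : (r₂ 0 * x 1 - r₂ 1 * x 0)^2 = 0 := by linarith
      exact pow_eq_zero_iff two0 |>.mp this
    obtain ⟨a, ha⟩ := parallel_of_cross_zero r₁ x hx c₁0 c₁1 c₁2
    obtain ⟨b, hb⟩ := parallel_of_cross_zero r₂ x hx c₂0 c₂1 c₂2
    have hpair := LinearIndependent.pair_iff.mp hli
    have : b • r₁ + (-a) • r₂ = 0 := by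
      rw [ha, hb, smul_smul, smul_smul]
      module
    have hab := hpair b (-a) this
    have ha0 : a ≠ 0 := by
      intro h0
      have : r₁ = 0 := by rw [ha, h0, zero_smul]
      exact one_ne_zero (hpair 1 0 (by simp [this])).1
    exact ha0 (by linarith [hab.2])
end

section
/- If r₁, r₂ ∈ ℝ³ are linearly independent unit vectors, then for any μ > 0 there exist k₁, k₂ > 0 such that -k₁(r₁ₓ)² - k₂(r₂ₓ)² ⪰ μ I (i.e., all eigenvalues are at least μ). -/
open Matrix
set_option maxHeartbeats 1000000

private lemma key0 (t a b S k μ : ℝ) (hμ : 0 < μ) (ht : t^2 < 1)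
    (hk : k = 2*μ/(1-t^2))
    (hG : 0 ≤ (1-t^2)*S - a^2 - b^2 + 2*t*a*b)
    (ha : a^2 ≤ S) (hb : b^2 ≤ S) :
    0 ≤ k*(S-a^2) + k*(S-b^2) - μ*S := by
  have h1 : 0 < 1 - t^2 := by linarith
  have h1t : 0 < 1 - t := by nlinarith
  have h1t' : 0 < 1 + t := by nlinarith
  have hF : 0 ≤ (3+t^2)*S - 2*(a^2+b^2) := by
    rcases le_or_gt 0 t with htp | htn
    · nlinarith [mul_nonneg h1t'.le hG, mul_nonneg (mul_nonneg htp h1t'.le) (sq_nonneg (a-b)),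
        mul_nonneg (sq_nonneg (1-t)) (by linarith : (0:ℝ) ≤ S - a^2),
        mul_nonneg (sq_nonneg (1-t)) (by linarith : (0:ℝ) ≤ S - b^2)]
    · nlinarith [mul_nonneg h1t.le hG, mul_nonneg (mul_nonneg (by linarith : (0:ℝ) ≤ -t) h1t.le) (sq_nonneg (a+b)),
        mul_nonneg (sq_nonneg (1+t)) (by linarith : (0:ℝ) ≤ S - a^2),
        mul_nonneg (sq_nonneg (1+t)) (by linarith : (0:ℝ) ≤ S - b^2)]
  have e : k*(S-a^2) + k*(S-b^2) - μ*S = μ * ((3+t^2)*S - 2*(a^2+b^2)) / (1-t^2) := by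
    rw [hk]; field_simp; ring
  rw [e]
  positivity

private lemma key (p0 p1 p2 q0 q1 q2 x0 x1 x2 k μ : ℝ)
    (hp : p0^2+p1^2+p2^2 = 1) (hq : q0^2+q1^2+q2^2 = 1)
    (ht : (p0*q0+p1*q1+p2*q2)^2 < 1)
    (hk : k = 2*μ/(1-(p0*q0+p1*q1+p2*q2)^2)) (hμ : 0 < μ) :
    0 ≤ k*((p0^2+p1^2+p2^2)*(x0^2+x1^2+x2^2) - (p0*x0+p1*x1+p2*x2)^2)
      + k*((q0^2+q1^2+q2^2)*(x0^2+x1^2+x2^2) - (q0*x0+q1*x1+q2*x2)^2)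
      - μ*(x0^2+x1^2+x2^2) := by
  have ha : (p0*x0+p1*x1+p2*x2)^2 ≤ x0^2+x1^2+x2^2 := by
    have hL : (p0^2+p1^2+p2^2)*(x0^2+x1^2+x2^2) - (p0*x0+p1*x1+p2*x2)^2
        = (p0*x1-p1*x0)^2+(p0*x2-p2*x0)^2+(p1*x2-p2*x1)^2 := by ring
    rw [hp, one_mul] at hL
    nlinarith [sq_nonneg (p0*x1-p1*x0), sq_nonneg (p0*x2-p2*x0), sq_nonneg (p1*x2-p2*x1)]
  have hb : (q0*x0+q1*x1+q2*x2)^2 ≤ x0^2+x1^2+x2^2 := by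
    have hL : (q0^2+q1^2+q2^2)*(x0^2+x1^2+x2^2) - (q0*x0+q1*x1+q2*x2)^2
        = (q0*x1-q1*x0)^2+(q0*x2-q2*x0)^2+(q1*x2-q2*x1)^2 := by ring
    rw [hq, one_mul] at hL
    nlinarith [sq_nonneg (q0*x1-q1*x0), sq_nonneg (q0*x2-q2*x0), sq_nonneg (q1*x2-q2*x1)]
  have hG : 0 ≤ (1-(p0*q0+p1*q1+p2*q2)^2)*(x0^2+x1^2+x2^2)
      - (p0*x0+p1*x1+p2*x2)^2 - (q0*x0+q1*x1+q2*x2)^2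
      + 2*(p0*q0+p1*q1+p2*q2)*(p0*x0+p1*x1+p2*x2)*(q0*x0+q1*x1+q2*x2) := by
    have hgeq : (1-(p0*q0+p1*q1+p2*q2)^2)*(x0^2+x1^2+x2^2)
        - (p0*x0+p1*x1+p2*x2)^2 - (q0*x0+q1*x1+q2*x2)^2
        + 2*(p0*q0+p1*q1+p2*q2)*(p0*x0+p1*x1+p2*x2)*(q0*x0+q1*x1+q2*x2)
        = (p0*(q1*x2-q2*x1) - p1*(q0*x2-q2*x0) + p2*(q0*x1-q1*x0))^2 := by
      linear_combination ((q0*x0+q1*x1+q2*x2)^2 - (x0^2+x1^2+x2^2)) * hp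
        + ((p0*x0+p1*x1+p2*x2)^2 - (p0^2+p1^2+p2^2)*(x0^2+x1^2+x2^2)) * hq
    rw [hgeq]; positivity
  have h := key0 (p0*q0+p1*q1+p2*q2) (p0*x0+p1*x1+p2*x2) (q0*x0+q1*x1+q2*x2)
    (x0^2+x1^2+x2^2) k μ hμ ht hk hG ha hb
  rw [hp, hq]
  linarith

theorem stmt3 (r₁ r₂ : Fin 3 → ℝ)
    (h₁ : enorm3 r₁ = 1) (h₂ : enorm3 r₂ = 1)
    (hli : LinearIndependent ℝ ![r₁, r₂]) (μ : ℝ) (hμ : 0 < μ) :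
    ∃ k₁ k₂ : ℝ, 0 < k₁ ∧ 0 < k₂ ∧
      ((-(k₁ • (skew r₁ ^ 2)) - k₂ • (skew r₂ ^ 2)) - μ • (1 : Matrix (Fin 3) (Fin 3) ℝ)).PosSemidef := by
  have hp : r₁ 0 ^ 2 + r₁ 1 ^ 2 + r₁ 2 ^ 2 = 1 := by
    have := (Real.sqrt_eq_one).mp h₁
    simp only [dotProduct, Fin.sum_univ_three] at this
    nlinarith [this]
  have hq : r₂ 0 ^ 2 + r₂ 1 ^ 2 + r₂ 2 ^ 2 = 1 := by
    have := (Real.sqrt_eq_one).mp h₂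
    simp only [dotProduct, Fin.sum_univ_three] at this
    nlinarith [this]
  have hli2 := (linearIndependent_fin2.mp hli).2
  simp only [Matrix.cons_val_one, Matrix.head_cons, Matrix.cons_val_zero] at hli2
  set t := r₁ 0 * r₂ 0 + r₁ 1 * r₂ 1 + r₁ 2 * r₂ 2 with htd
  have ht : t^2 < 1 := by
    by_contra hcon
    push_neg at hcon
    have hsum : (r₁ 0 - t * r₂ 0)^2 + (r₁ 1 - t * r₂ 1)^2 + (r₁ 2 - t * r₂ 2)^2 = 1 - t^2 := by
      rw [htd]
      linear_combination hp + (r₁ 0 * r₂ 0 + r₁ 1 * r₂ 1 + r₁ 2 * r₂ 2)^2 * hq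
    have h0 : (r₁ 0 - t * r₂ 0)^2 + (r₁ 1 - t * r₂ 1)^2 + (r₁ 2 - t * r₂ 2)^2 ≤ 0 := by linarith
    have e0 : t * r₂ 0 = r₁ 0 := by
      nlinarith [sq_nonneg (r₁ 0 - t * r₂ 0), sq_nonneg (r₁ 1 - t * r₂ 1), sq_nonneg (r₁ 2 - t * r₂ 2)]
    have e1 : t * r₂ 1 = r₁ 1 := by
      nlinarith [sq_nonneg (r₁ 0 - t * r₂ 0), sq_nonneg (r₁ 1 - t * r₂ 1), sq_nonneg (r₁ 2 - t * r₂ 2)]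
    have e2 : t * r₂ 2 = r₁ 2 := by
      nlinarith [sq_nonneg (r₁ 0 - t * r₂ 0), sq_nonneg (r₁ 1 - t * r₂ 1), sq_nonneg (r₁ 2 - t * r₂ 2)]
    apply hli2 t
    funext i
    fin_cases i
    · simpa using e0
    · simpa using e1
    · simpa using e2
  have h1t : 0 < 1 - t^2 := by nlinarith
  obtain ⟨k, hk0, hkdef⟩ : ∃ k : ℝ, 0 < k ∧ k = 2*μ/(1-t^2) :=
    ⟨2*μ/(1-t^2), by positivity, rfl⟩
  refine ⟨k, k, hk0, hk0, posSemidef_iff_dotProduct_mulVec.mpr ⟨?_, ?_⟩⟩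
  · have hsm : ∀ (c : ℝ) (A : Matrix (Fin 3) (Fin 3) ℝ), A.IsHermitian → (c • A).IsHermitian := by
      intro c A hA
      show (c • A)ᴴ = c • A
      rw [Matrix.conjTranspose_smul, hA, star_trivial]
    have hsk : ∀ v : Fin 3 → ℝ, ((skew v)^2).IsHermitian := by
      intro v
      have h : (skew v)ᴴ = - skew v := by
        ext i j
        fin_cases i <;> fin_cases j <;> simp [skew]
      show ((skew v)^2)ᴴ = (skew v)^2
      rw [pow_two, conjTranspose_mul, h, neg_mul_neg]
    exact (((hsm k _ (hsk r₁)).neg.sub (hsm k _ (hsk r₂))).sub (hsm μ _ Matrix.isHermitian_one))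
  · intro x
    have hkdef' : k = 2*μ/(1-(r₁ 0 * r₂ 0 + r₁ 1 * r₂ 1 + r₁ 2 * r₂ 2)^2) := by
      rw [hkdef, htd]
    have hkey := key (r₁ 0) (r₁ 1) (r₁ 2) (r₂ 0) (r₂ 1) (r₂ 2) (x 0) (x 1) (x 2) k μ
      hp hq (htd ▸ ht) hkdef' hμ
    simp [star_trivial, dotProduct, Matrix.mulVec, Fin.sum_univ_three, pow_two,
      Matrix.sub_apply, Matrix.neg_apply, Matrix.smul_apply, Matrix.one_apply, smul_eq_mul,
      Matrix.mul_apply, skew, Matrix.cons_val_two, Matrix.tail_cons]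
    nlinarith [hkey]
end
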